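/- For positive reals a < c with a/c ≤ 1/4, setting w = 4a²/(√c - √a)², the value P*(w) = (√(c² + (4ac/w)(a+c)) - (2a+c))/(2a(a+c)) equals (√(ac) - 2a)/(2a²), the maximum power satisfying the symmetric noisy-interference condition. -/
import Mathlib


/-- The inverse of the marginal-rate function for a symmetric sub-channel. -/
noncomputable def Pstar (a c k : ℝ) : ℝ :=
  (Real.sqrt (c ^ 2 + (4 * a * c / k) * (a + c)) - (2 * a + c)) / (2 * a * (a + c))

/-- at w = 4a²/(√c-√a)², P*(w) equals the maximum symmetric
noisy-interference power (√(ac)-2a)/(2a²). -/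
theorem Pstar_at_w (a c : ℝ) (ha : 0 < a) (hac : a < c) (h : a / c ≤ 1 / 4) :
    Pstar a c (4 * a ^ 2 / (Real.sqrt c - Real.sqrt a) ^ 2)
      = (Real.sqrt (a * c) - 2 * a) / (2 * a ^ 2) := by
  have hc : 0 < c := ha.trans hac
  set s := Real.sqrt a with hs_def
  set t := Real.sqrt c with ht_def
  have hs : 0 < s := Real.sqrt_pos.mpr ha
  have ht : 0 < t := Real.sqrt_pos.mpr hc
  have hsa : s ^ 2 = a := Real.sq_sqrt ha.le
  have htc : t ^ 2 = c := Real.sq_sqrt hc.le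
  have hst : s < t := Real.sqrt_lt_sqrt ha.le hac
  have h2s : 2 * s ≤ t := by
    have h4 : 4 * a ≤ c := by
      rw [div_le_div_iff₀ hc (by norm_num)] at h; linarith
    nlinarith [hsa, htc, sq_nonneg (2 * s - t), sq_nonneg (2 * s + t)]
  have hts : 0 < t - s := by linarith
  have hac' : Real.sqrt (a * c) = s * t := by
    rw [Real.sqrt_mul ha.le]
  have hE : c ^ 2 + (4 * a * c / (4 * a ^ 2 / (t - s) ^ 2)) * (a + c)
      = ((s * (2 * s ^ 2 + t ^ 2) + (s ^ 2 + t ^ 2) * (t - 2 * s)) / s) ^ 2 := by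
    have hs' : s ≠ 0 := hs.ne'
    have hts' : t - s ≠ 0 := hts.ne'
    rw [← hsa, ← htc]
    field_simp
    ring
  have hXnn : 0 ≤ (s * (2 * s ^ 2 + t ^ 2) + (s ^ 2 + t ^ 2) * (t - 2 * s)) / s := by
    apply div_nonneg _ hs.le
    have h1 : 0 ≤ s * (2 * s ^ 2 + t ^ 2) := by positivity
    nlinarith [sq_nonneg s, sq_nonneg t]
  have hsqrtE : Real.sqrt (c ^ 2 + (4 * a * c / (4 * a ^ 2 / (t - s) ^ 2)) * (a + c))
      = (s * (2 * s ^ 2 + t ^ 2) + (s ^ 2 + t ^ 2) * (t - 2 * s)) / s := by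
    rw [hE, Real.sqrt_sq hXnn]
  unfold Pstar
  rw [hsqrtE, hac', ← hsa, ← htc]
  have hs' : s ≠ 0 := hs.ne'
  have h1 : s ^ 2 + t ^ 2 ≠ 0 := by positivity
  field_simp
  ring
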